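/- T(E) decomposes as the internal direct sum of A-modules T(E) = S̃(E) ⊕ I_W. -/

import Mathlib

/-!
Context: `A` a commutative ring, `lam ∈ A`, `E` a finite free `A`-module with basis
`e : Fin (ν+ν') → E`, `ω` an alternating `A`-bilinear form.  `I_W ⊆ T(E)` is the
two-sided ideal generated by the elements `x ⊗ y − y ⊗ x − lam·ω(x,y)`, realized as
the `A`-submodule spanned by `a * (x ⊗ y − y ⊗ x − lam·ω(x,y)) * b`.  `S̃(E)` is the
`A`-submodule of `T(E)` spanned by the tensors `e_I` over nonincreasing sequences `I`.
-/

/-- `e_I = e_{i₁} ⊗ ⋯ ⊗ e_{i_p} ∈ T(E)` for a list of indices `I` (with `e_∅ = 1`). -/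
noncomputable def eTensor {A : Type*} [CommRing A] {E : Type*} [AddCommGroup E] [Module A E]
    {n : ℕ} (e : Module.Basis (Fin n) A E) (I : List (Fin n)) : TensorAlgebra A E :=
  (I.map fun i => TensorAlgebra.ι A (e i)).prod

/-- `S̃(E)`: the `A`-submodule of `T(E)` spanned by the tensors `e_I` over all
nonincreasing sequences `I`. -/
noncomputable def stilde {A : Type*} [CommRing A] {E : Type*} [AddCommGroup E] [Module A E]
    {n : ℕ} (e : Module.Basis (Fin n) A E) : Submodule A (TensorAlgebra A E) :=
  Submodule.span A {t | ∃ I : List (Fin n), List.Pairwise (· ≥ ·) I ∧ t = eTensor e I}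

/-- The two-sided ideal `I_W ⊆ T(E)` generated by the elements
`x ⊗ y − y ⊗ x − lam·ω(x,y)`, viewed as an `A`-submodule of `T(E)`. -/
def IW {A : Type*} [CommRing A] {E : Type*} [AddCommGroup E] [Module A E]
    (lam : A) (ω : E →ₗ[A] E →ₗ[A] A) : Submodule A (TensorAlgebra A E) :=
  Submodule.span A {t | ∃ (a b : TensorAlgebra A E) (x y : E),
    t = a * (TensorAlgebra.ι A x * TensorAlgebra.ι A y -
      TensorAlgebra.ι A y * TensorAlgebra.ι A x -
      algebraMap A (TensorAlgebra A E) (lam * ω x y)) * b}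

namespace Stmt3Aux


variable {A : Type*} [CommRing A] {E : Type*} [AddCommGroup E] [Module A E] {n : ℕ}

theorem eTensor_nil (e : Module.Basis (Fin n) A E) : eTensor e [] = 1 := rfl

theorem eTensor_cons (e : Module.Basis (Fin n) A E) (i : Fin n) (I : List (Fin n)) :
    eTensor e (i :: I) = TensorAlgebra.ι A (e i) * eTensor e I := by
  simp [eTensor]

theorem eTensor_append (e : Module.Basis (Fin n) A E) (P Q : List (Fin n)) :
    eTensor e (P ++ Q) = eTensor e P * eTensor e Q := by
  simp [eTensor]

/-- number of "bad" pairs (inversions) for nonincreasing order -/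
def linv : List (Fin n) → ℕ
  | [] => 0
  | a :: l => l.countP (fun b => decide (a < b)) + linv l

theorem sorted_of_linv_eq_zero : ∀ {L : List (Fin n)}, linv L = 0 → L.Pairwise (· ≥ ·)
  | [], _ => List.Pairwise.nil
  | a :: l, h => by
    rw [linv] at h
    rw [List.pairwise_cons]
    have h1 : l.countP (fun b => decide (a < b)) = 0 := by omega
    refine ⟨fun b hb => ?_, sorted_of_linv_eq_zero (by omega)⟩
    have := List.countP_eq_zero.mp h1 b hb
    simpa using le_of_not_gt (by simpa using this)

theorem exists_swap_of_not_sorted : ∀ {L : List (Fin n)}, ¬ L.Pairwise (· ≥ ·) →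
    ∃ (P : List (Fin n)) (a b : Fin n) (Q : List (Fin n)), a < b ∧ L = P ++ a :: b :: Q
  | [], h => absurd List.Pairwise.nil h
  | [x], h => absurd (List.pairwise_singleton _ x) h
  | x :: y :: t, h => by
    by_cases hxy : x < y
    · exact ⟨[], x, y, t, hxy, rfl⟩
    · have hs : ¬ (y :: t).Pairwise (· ≥ ·) := by
        intro hyt
        apply h
        rw [List.pairwise_cons]
        refine ⟨fun b hb => ?_, hyt⟩
        rcases List.mem_cons.mp hb with rfl | hb
        · exact le_of_not_gt hxy
        · exact le_trans ((List.pairwise_cons.mp hyt).1 b hb) (le_of_not_gt hxy)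
      obtain ⟨P, a, b, Q, hab, hL⟩ := exists_swap_of_not_sorted hs
      exact ⟨x :: P, a, b, Q, hab, by rw [hL]; rfl⟩

theorem linv_swap (a b : Fin n) (hab : a < b) : ∀ (P Q : List (Fin n)),
    linv (P ++ b :: a :: Q) < linv (P ++ a :: b :: Q)
  | [], Q => by
    simp only [List.nil_append, linv, List.countP_cons]
    have h1 : ¬ (b < a) := not_lt.mpr hab.le
    simp only [hab, h1]
    simp only [decide_eq_true_eq, if_pos, if_neg, not_false_iff]
    omega
  | x :: P, Q => by
    show List.countP _ (P ++ b :: a :: Q) + linv (P ++ b :: a :: Q) <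
      List.countP _ (P ++ a :: b :: Q) + linv (P ++ a :: b :: Q)
    have hperm : (P ++ b :: a :: Q).Perm (P ++ a :: b :: Q) :=
      List.Perm.append_left P (List.Perm.swap a b Q)
    rw [hperm.countP_eq]
    have := linv_swap a b hab P Q
    omega



section Span

variable (lam : A) (ω : E →ₗ[A] E →ₗ[A] A) (e : Module.Basis (Fin n) A E)

theorem eTensor_swap_identity (a b : Fin n) (P Q : List (Fin n)) :
    eTensor e (P ++ a :: b :: Q) = eTensor e (P ++ b :: a :: Q)
      + (lam * ω (e a) (e b)) • eTensor e (P ++ Q)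
      + eTensor e P * (TensorAlgebra.ι A (e a) * TensorAlgebra.ι A (e b)
          - TensorAlgebra.ι A (e b) * TensorAlgebra.ι A (e a)
          - algebraMap A (TensorAlgebra A E) (lam * ω (e a) (e b))) * eTensor e Q := by
  simp only [eTensor_append, eTensor_cons, Algebra.smul_def]
  rw [show (algebraMap A (TensorAlgebra A E)) (lam * ω (e a) (e b)) * (eTensor e P * eTensor e Q)
      = eTensor e P * ((algebraMap A (TensorAlgebra A E)) (lam * ω (e a) (e b))) * eTensor e Q by
    rw [← mul_assoc, Algebra.commutes]]
  noncomm_ring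

theorem eTensor_mem_sup :
    ∀ (N k : ℕ) (L : List (Fin n)), L.length ≤ N → linv L ≤ k →
      eTensor e L ∈ stilde e ⊔ IW lam ω := by
  intro N
  induction N with
  | zero =>
    intro k L hL _
    have : L = [] := List.length_eq_zero_iff.mp (Nat.le_zero.mp hL)
    subst this
    exact Submodule.mem_sup_left (Submodule.subset_span ⟨[], List.Pairwise.nil, rfl⟩)
  | succ N ihN =>
    intro k
    induction k with
    | zero =>
      intro L hL hk
      exact Submodule.mem_sup_left
        (Submodule.subset_span ⟨L, sorted_of_linv_eq_zero (Nat.le_zero.mp hk), rfl⟩)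
    | succ k ihk =>
      intro L hL hk
      by_cases hs : L.Pairwise (· ≥ ·)
      · exact Submodule.mem_sup_left (Submodule.subset_span ⟨L, hs, rfl⟩)
      · obtain ⟨P, a, b, Q, hab, rfl⟩ := exists_swap_of_not_sorted hs
        have hlen : (P ++ b :: a :: Q).length ≤ N + 1 := by
          simp only [List.length_append, List.length_cons] at hL ⊢; omega
        have hswap := linv_swap a b hab P Q
        have h1 : eTensor e (P ++ b :: a :: Q) ∈ stilde e ⊔ IW lam ω :=
          ihk _ hlen (by omega)
        have h2 : eTensor e (P ++ Q) ∈ stilde e ⊔ IW lam ω :=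
          ihN (linv (P ++ Q)) _
            (by simp only [List.length_append, List.length_cons] at hL ⊢; omega) le_rfl
        have h3 : eTensor e P * (TensorAlgebra.ι A (e a) * TensorAlgebra.ι A (e b)
            - TensorAlgebra.ι A (e b) * TensorAlgebra.ι A (e a)
            - algebraMap A (TensorAlgebra A E) (lam * ω (e a) (e b))) * eTensor e Q
            ∈ IW lam ω :=
          Submodule.subset_span ⟨eTensor e P, eTensor e Q, e a, e b, rfl⟩
        rw [eTensor_swap_identity]
        exact add_mem (add_mem h1 (Submodule.smul_mem _ _ h2)) (Submodule.mem_sup_right h3)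

theorem sup_eq_top : stilde e ⊔ IW lam ω = ⊤ := by
  rw [eq_top_iff]
  have hM : ∀ t : TensorAlgebra A E, t ∈ Submodule.span A (Set.range (eTensor e)) := by
    intro t
    induction t using TensorAlgebra.induction with
    | algebraMap r =>
      rw [Algebra.algebraMap_eq_smul_one]
      exact Submodule.smul_mem _ _ (Submodule.subset_span ⟨[], rfl⟩)
    | ι x =>
      have hx : x ∈ Submodule.span A (Set.range e) := by rw [e.span_eq]; trivial
      induction hx using Submodule.span_induction with
      | mem z hz =>
        obtain ⟨i, rfl⟩ := hz
        exact Submodule.subset_span ⟨[i], by simp [eTensor]⟩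
      | zero => rw [map_zero]; exact zero_mem _
      | add u v hu hv hpu hpv => rw [map_add]; exact add_mem hpu hpv
      | smul c u hu hpu => rw [map_smul]; exact Submodule.smul_mem _ _ hpu
    | mul u v hu hv =>
      have h := Submodule.mul_mem_mul hu hv
      rw [Submodule.span_mul_span] at h
      refine Submodule.span_le.mpr ?_ h
      rintro t ⟨t1, ht1, t2, ht2, rfl⟩
      obtain ⟨L1, rfl⟩ := ht1
      obtain ⟨L2, rfl⟩ := ht2
      exact Submodule.subset_span ⟨L1 ++ L2, by simp [eTensor_append]⟩
    | add u v hu hv => exact add_mem hu hv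
  intro t _
  refine Submodule.span_le.mpr ?_ (hM t)
  rintro s ⟨L, rfl⟩
  exact eTensor_mem_sup lam ω e L.length (linv L) L le_rfl le_rfl

end Span



section Rep

open MvPolynomial

variable (lam : A) (ω : E →ₗ[A] E →ₗ[A] A) (e : Module.Basis (Fin n) A E)

/-- partial derivative as a linear endomorphism -/
noncomputable def pd (j : Fin n) : Module.End A (MvPolynomial (Fin n) A) :=
  (MvPolynomial.pderiv j).toLinearMap

theorem pd_mulLeft (j : Fin n) (q : MvPolynomial (Fin n) A) :
    pd j * LinearMap.mulLeft A q
      = LinearMap.mulLeft A q * pd (A := A) j + LinearMap.mulLeft A (pderiv j q) := by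
  refine LinearMap.ext fun p => ?_
  show pderiv j (q * p) = q * pderiv j p + pderiv j q * p
  rw [pderiv_mul]; ring

theorem pd_comm (j k : Fin n) : pd (A := A) j * pd k = pd k * pd j := by
  refine LinearMap.ext fun p => ?_
  show pderiv j (pderiv k p) = pderiv k (pderiv j p)
  induction p using MvPolynomial.induction_on' with
  | add p q hp hq => simp [hp, hq]
  | monomial s a =>
    rcases eq_or_ne j k with rfl | hjk
    · rfl
    · simp only [pderiv_monomial]
      congr 1
      · rw [tsub_right_comm]
      · rw [Finsupp.tsub_apply, Finsupp.tsub_apply, Finsupp.single_eq_of_ne hjk,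
          Finsupp.single_eq_of_ne (Ne.symm hjk)]
        simp only [Nat.sub_zero]; ring

noncomputable def betac (i j : Fin n) : A := if i < j then ω (e i) (e j) else 0

noncomputable def Dop (i : Fin n) : Module.End A (MvPolynomial (Fin n) A) :=
  ∑ j : Fin n, betac ω e i j • pd j

theorem Dop_mulX (i j : Fin n) :
    Dop ω e i * LinearMap.mulLeft A (X j) - LinearMap.mulLeft A (X j) * Dop ω e i
      = betac ω e i j • (1 : Module.End A (MvPolynomial (Fin n) A)) := by
  classical
  unfold Dop
  rw [Finset.sum_mul, Finset.mul_sum, ← Finset.sum_sub_distrib]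
  have hterm : ∀ k : Fin n,
      (betac ω e i k • pd k) * LinearMap.mulLeft A (X j)
        - LinearMap.mulLeft A (X j) * (betac ω e i k • pd k)
      = betac ω e i k • LinearMap.mulLeft A (pderiv k (X j)) := by
    intro k
    rw [smul_mul_assoc, mul_smul_comm, pd_mulLeft, smul_add]
    abel
  rw [Finset.sum_congr rfl fun k _ => hterm k]
  rw [Finset.sum_eq_single j]
  · rw [pderiv_X_self, LinearMap.mulLeft_one]; rfl
  · intro k _ hkj
    rw [pderiv_X_of_ne (Ne.symm hkj), LinearMap.mulLeft_zero_eq_zero, smul_zero]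
  · intro h; exact absurd (Finset.mem_univ j) h

theorem Dop_comm (i j : Fin n) : Commute (Dop ω e i) (Dop ω e j) := by
  unfold Dop
  refine Commute.sum_left _ _ _ fun k _ => Commute.sum_right _ _ _ fun l _ => ?_
  have hc : Commute (pd (A := A) k) (pd l) := pd_comm k l
  exact (hc.smul_left (betac ω e i k)).smul_right (betac ω e j l)

noncomputable def op (i : Fin n) : Module.End A (MvPolynomial (Fin n) A) :=
  LinearMap.mulLeft A (X i) + lam • Dop ω e i

theorem op_comm (halt : ∀ x : E, ω x x = 0) (i j : Fin n) :
    op lam ω e i * op lam ω e j - op lam ω e j * op lam ω e i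
      = (lam * ω (e i) (e j)) • (1 : Module.End A (MvPolynomial (Fin n) A)) := by
  have hskew : ∀ x y : E, ω x y = - ω y x := by
    intro x y
    have h := halt (x + y)
    simp only [map_add, LinearMap.add_apply, halt] at h
    linear_combination h
  have expand : ∀ (M1 M2 D1 D2 : Module.End A (MvPolynomial (Fin n) A)),
      (M1 + lam • D1) * (M2 + lam • D2) - (M2 + lam • D2) * (M1 + lam • D1)
        = (M1*M2 - M2*M1) + lam • ((D1*M2 - M2*D1) - (D2*M1 - M1*D2))
          + (lam*lam) • (D1*D2 - D2*D1) := by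
    intro M1 M2 D1 D2
    simp only [mul_add, add_mul, smul_mul_assoc, mul_smul_comm, smul_smul, smul_sub, smul_add]
    abel
  unfold op
  rw [expand]
  have hMM : LinearMap.mulLeft A (X i) * LinearMap.mulLeft A (X j)
      - LinearMap.mulLeft A (X j) * LinearMap.mulLeft A (X i)
      = (0 : Module.End A (MvPolynomial (Fin n) A)) := by
    refine LinearMap.ext fun p => ?_
    simp only [LinearMap.sub_apply, Module.End.mul_apply, LinearMap.mulLeft_apply,
      LinearMap.zero_apply]
    ring
  have hDD : Dop ω e i * Dop ω e j - Dop ω e j * Dop ω e i = 0 := by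
    rw [(Dop_comm ω e i j).eq, sub_self]
  have hb : betac ω e i j - betac ω e j i = ω (e i) (e j) := by
    unfold betac
    rcases lt_trichotomy i j with h | rfl | h
    · rw [if_pos h, if_neg (not_lt.mpr h.le), sub_zero]
    · rw [if_neg (lt_irrefl i), sub_self, halt]
    · rw [if_neg (not_lt.mpr h.le), if_pos h, zero_sub, hskew (e i) (e j)]
  rw [hMM, hDD, smul_zero, add_zero, zero_add, Dop_mulX, Dop_mulX]
  refine LinearMap.ext fun p => ?_
  simp only [LinearMap.smul_apply, LinearMap.sub_apply, Module.End.one_apply]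
  rw [smul_sub, smul_smul, smul_smul, ← hb, mul_sub, sub_smul]

noncomputable def rho : E →ₗ[A] Module.End A (MvPolynomial (Fin n) A) :=
  Module.Basis.constr e A (op lam ω e)

/-- commutator bilinear defect -/
noncomputable def commF (x y : E) : Module.End A (MvPolynomial (Fin n) A) :=
  rho lam ω e x * rho lam ω e y - rho lam ω e y * rho lam ω e x
    - (lam * ω x y) • (1 : Module.End A (MvPolynomial (Fin n) A))

theorem commF_add_right (x y z : E) :
    commF lam ω e x (y + z) = commF lam ω e x y + commF lam ω e x z := by
  simp only [commF, map_add, LinearMap.add_apply, mul_add, add_mul, add_smul]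
  abel

theorem commF_smul_right (x : E) (c : A) (y : E) :
    commF lam ω e x (c • y) = c • commF lam ω e x y := by
  simp only [commF, map_smul, LinearMap.smul_apply, mul_smul_comm, smul_mul_assoc,
    smul_sub, smul_smul, smul_eq_mul]
  rw [mul_left_comm]

theorem commF_add_left (x y z : E) :
    commF lam ω e (x + y) z = commF lam ω e x z + commF lam ω e y z := by
  simp only [commF, map_add, LinearMap.add_apply, mul_add, add_mul, add_smul]
  abel

theorem commF_smul_left (c : A) (x y : E) :
    commF lam ω e (c • x) y = c • commF lam ω e x y := by
  simp only [commF, map_smul, LinearMap.smul_apply, mul_smul_comm, smul_mul_assoc,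
    smul_sub, smul_smul, smul_eq_mul]
  rw [mul_left_comm]

theorem commF_eq_zero (halt : ∀ x : E, ω x x = 0) (x y : E) : commF lam ω e x y = 0 := by
  have hb : ∀ i j : Fin n, commF lam ω e (e i) (e j) = 0 := by
    intro i j
    unfold commF rho
    rw [Module.Basis.constr_basis, Module.Basis.constr_basis, sub_eq_zero]
    exact op_comm lam ω e halt i j
  have key1 : ∀ (i : Fin n) (y : E), commF lam ω e (e i) y = 0 := by
    intro i y
    have hy : y ∈ Submodule.span A (Set.range e) := by rw [e.span_eq]; trivial
    induction hy using Submodule.span_induction with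
    | mem z hz => obtain ⟨j, rfl⟩ := hz; exact hb i j
    | zero =>
      simp [commF]
    | add u v hu hv h1 h2 => rw [commF_add_right, h1, h2, add_zero]
    | smul c u hu h1 => rw [commF_smul_right, h1, smul_zero]
  have hx : x ∈ Submodule.span A (Set.range e) := by rw [e.span_eq]; trivial
  induction hx using Submodule.span_induction with
  | mem z hz => obtain ⟨i, rfl⟩ := hz; exact key1 i y
  | zero => simp [commF]
  | add u v hu hv h1 h2 => rw [commF_add_left, h1, h2, add_zero]
  | smul c u hu h1 => rw [commF_smul_left, h1, smul_zero]


noncomputable def Phi : TensorAlgebra A E →ₐ[A] Module.End A (MvPolynomial (Fin n) A) :=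
  TensorAlgebra.lift A (rho lam ω e)

noncomputable def phi : TensorAlgebra A E →ₗ[A] MvPolynomial (Fin n) A where
  toFun t := Phi lam ω e t 1
  map_add' u v := by simp
  map_smul' c u := by simp

theorem rho_comm (halt : ∀ x : E, ω x x = 0) (x y : E) :
    rho lam ω e x * rho lam ω e y - rho lam ω e y * rho lam ω e x
      = (lam * ω x y) • (1 : Module.End A (MvPolynomial (Fin n) A)) := by
  have h := commF_eq_zero lam ω e halt x y
  unfold commF at h
  rw [sub_eq_zero] at h
  exact h

theorem IW_le_ker (halt : ∀ x : E, ω x x = 0) :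
    IW lam ω ≤ LinearMap.ker (phi lam ω e) := by
  rw [IW, Submodule.span_le]
  rintro t ⟨a, b, x, y, rfl⟩
  simp only [SetLike.mem_coe, LinearMap.mem_ker]
  show Phi lam ω e (a * (TensorAlgebra.ι A x * TensorAlgebra.ι A y -
      TensorAlgebra.ι A y * TensorAlgebra.ι A x -
      algebraMap A (TensorAlgebra A E) (lam * ω x y)) * b) 1 = 0
  have hmid : Phi lam ω e (TensorAlgebra.ι A x * TensorAlgebra.ι A y -
      TensorAlgebra.ι A y * TensorAlgebra.ι A x -
      algebraMap A (TensorAlgebra A E) (lam * ω x y)) = 0 := by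
    rw [map_sub, map_sub, map_mul, map_mul, AlgHom.commutes]
    simp only [Phi, TensorAlgebra.lift_ι_apply]
    rw [rho_comm lam ω e halt, Module.algebraMap_end_eq_smul_id, sub_eq_zero]
    rfl
  rw [map_mul, map_mul, hmid, mul_zero, zero_mul, LinearMap.zero_apply]

theorem phi_iota_mul (x : E) (t : TensorAlgebra A E) :
    phi lam ω e (TensorAlgebra.ι A x * t) = rho lam ω e x (phi lam ω e t) := by
  show Phi lam ω e (TensorAlgebra.ι A x * t) 1 = rho lam ω e x (Phi lam ω e t 1)
  rw [map_mul]
  show Phi lam ω e (TensorAlgebra.ι A x) (Phi lam ω e t 1) = _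
  rw [Phi, TensorAlgebra.lift_ι_apply]

/-- exponent multiset of a list of indices -/
noncomputable def mult : List (Fin n) → (Fin n →₀ ℕ)
  | [] => 0
  | i :: I => Finsupp.single i 1 + mult I

theorem mult_count (I : List (Fin n)) (k : Fin n) : mult I k = I.count k := by
  induction I with
  | nil => simp [mult]
  | cons i I ih =>
    rw [mult, Finsupp.add_apply, ih, List.count_cons, Finsupp.single_apply]
    by_cases h : i = k <;> simp [h] <;> omega

theorem phi_eTensor (halt : ∀ x : E, ω x x = 0) :
    ∀ I : List (Fin n), I.Pairwise (· ≥ ·) →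
      phi lam ω e (eTensor e I) = MvPolynomial.monomial (mult I) 1
  | [], _ => by
    show Phi lam ω e (eTensor e []) 1 = _
    have h1 : Phi lam ω e (1 : TensorAlgebra A E) = 1 := map_one _
    rw [eTensor_nil, h1]
    show (1 : MvPolynomial (Fin n) A) = _
    rw [show mult ([] : List (Fin n)) = 0 from rfl]
    simp
  | i :: J, hs => by
    have hJ := (List.pairwise_cons.mp hs).2
    have hhead := (List.pairwise_cons.mp hs).1
    rw [eTensor_cons, phi_iota_mul, phi_eTensor halt J hJ]
    unfold rho
    rw [Module.Basis.constr_basis]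
    show LinearMap.mulLeft A (MvPolynomial.X i) (MvPolynomial.monomial (mult J) 1)
        + (lam • Dop ω e i) (MvPolynomial.monomial (mult J) 1) = _
    have hD : Dop ω e i (MvPolynomial.monomial (mult J) 1) = 0 := by
      unfold Dop
      rw [LinearMap.sum_apply]
      apply Finset.sum_eq_zero
      intro k _
      rw [LinearMap.smul_apply]
      unfold betac
      by_cases hik : i < k
      · have hk0 : mult J k = 0 := by
          rw [mult_count, List.count_eq_zero]
          intro hkJ
          exact absurd (lt_of_lt_of_le hik (hhead k hkJ)) (lt_irrefl i)
        have hpd : pd (A := A) k (MvPolynomial.monomial (mult J) (1 : A))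
            = MvPolynomial.monomial (mult J - Finsupp.single k 1)
                ((1 : A) * ((mult J k : ℕ) : A)) := by
          show (MvPolynomial.pderiv k) (MvPolynomial.monomial (mult J) (1 : A)) = _
          exact MvPolynomial.pderiv_monomial
        rw [hpd, hk0]
        simp
      · rw [if_neg hik, zero_smul]
    rw [LinearMap.smul_apply, hD, smul_zero, add_zero, LinearMap.mulLeft_apply]
    rw [show (MvPolynomial.X i : MvPolynomial (Fin n) A)
        = MvPolynomial.monomial (Finsupp.single i 1) 1 from rfl]
    rw [MvPolynomial.monomial_mul, one_mul, mult]

end Rep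

end Stmt3Aux


/-- `T(E)` decomposes as the internal direct sum of `A`-modules
`T(E) = S̃(E) ⊕ I_W`. -/
theorem stmt3 (A : Type*) [CommRing A] (E : Type*) [AddCommGroup E] [Module A E]
    (lam : A) (ω : E →ₗ[A] E →ₗ[A] A) (halt : ∀ x : E, ω x x = 0)
    (ν ν' : ℕ) (e : Module.Basis (Fin (ν + ν')) A E) :
    IsCompl (stilde e) (IW lam ω) := by

  open Stmt3Aux in
  constructor
  · rw [Submodule.disjoint_def]
    intro t ht hw
    have hset : {t : TensorAlgebra A E |
        ∃ I : List (Fin (ν + ν')), List.Pairwise (· ≥ ·) I ∧ t = eTensor e I}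
        = Set.range (fun I : {I : List (Fin (ν + ν')) // I.Pairwise (· ≥ ·)} => eTensor e I.1) := by
      ext s
      constructor
      · rintro ⟨I, hI, rfl⟩; exact ⟨⟨I, hI⟩, rfl⟩
      · rintro ⟨⟨I, hI⟩, rfl⟩; exact ⟨I, hI, rfl⟩
    rw [stilde, hset, Finsupp.mem_span_range_iff_exists_finsupp] at ht
    obtain ⟨c, hc⟩ := ht
    have hphi : phi lam ω e t = 0 := LinearMap.mem_ker.mp (IW_le_ker lam ω e halt hw)
    have hsum : (c.sum fun I a => a • MvPolynomial.monomial (mult I.1) (1 : A)) = 0 := by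
      rw [← hphi, ← hc, map_finsuppSum]
      exact Finsupp.sum_congr fun I _ => by
        rw [map_smul, phi_eTensor lam ω e halt I.1 I.2]
    haveI : IsAntisymm (Fin (ν + ν')) (· ≥ ·) := ⟨fun a b h1 h2 => le_antisymm h2 h1⟩
    have hinj : Function.Injective
        (fun I : {I : List (Fin (ν + ν')) // I.Pairwise (· ≥ ·)} => mult I.1) := by
      rintro ⟨I, hI⟩ ⟨J, hJ⟩ h
      simp only at h
      refine Subtype.ext (List.Perm.eq_of_pairwise (fun a b _ _ h1 h2 => le_antisymm h2 h1) hI hJ ?_)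
      rw [List.perm_iff_count]
      intro k
      rw [← mult_count, ← mult_count, h]
    have li := (MvPolynomial.basisMonomials (Fin (ν + ν')) A).linearIndependent.comp _ hinj
    rw [linearIndependent_iff] at li
    have hc0 : c = 0 := by
      refine li c ?_
      rw [Finsupp.linearCombination_apply]
      have : (c.sum fun I a =>
          a • (⇑(MvPolynomial.basisMonomials (Fin (ν + ν')) A) ∘
            fun I : {I : List (Fin (ν + ν')) // I.Pairwise (· ≥ ·)} => mult I.1) I) =
          (c.sum fun I a => a • MvPolynomial.monomial (mult I.1) (1 : A)) := by
        refine Finsupp.sum_congr fun I _ => by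
          rw [Function.comp_apply, MvPolynomial.coe_basisMonomials]
      rw [this, hsum]
    rw [← hc, hc0, Finsupp.sum_zero_index]
  · rw [codisjoint_iff]
    exact sup_eq_top lam ω e
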